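/- Let β be a real number with 0 < β ≤ 27/4. Then the function (t, δ) ↦ t³ / (β − (log δ)²) is convex on the convex set { (t, δ) ∈ ℝ² : t > 0, δ > 0, (log δ)² < β }. -/

import Mathlib

noncomputable section

open Real Set

/-- Radon-type inequality: `(A+C)^3/(B+D)^2 ≤ A^3/B^2 + C^3/D^2`. -/
lemma radon2 {A C B D : ℝ} (hA : 0 ≤ A) (hC : 0 ≤ C) (hB : 0 < B) (hD : 0 < D) :
    (A + C) ^ 3 / (B + D) ^ 2 ≤ A ^ 3 / B ^ 2 + C ^ 3 / D ^ 2 := by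
  rw [div_add_div _ _ (by positivity) (by positivity),
    div_le_div_iff₀ (by positivity) (by positivity)]
  nlinarith [mul_nonneg (sq_nonneg (A * D - C * B))
    (by positivity : (0:ℝ) ≤ D * (A * D + 2 * C * B) + B * (2 * A * D + C * B))]

lemma key_cubic {β L : ℝ} (hβ : β ≤ 27 / 4) (hL : L ^ 2 < β) :
    β * L - L ^ 3 - β ≤ 0 := by
  have hβ0 : 0 < β := lt_of_le_of_lt (sq_nonneg L) hL
  rcases le_or_gt L 0 with h | h
  · nlinarith [mul_nonneg (neg_nonneg.2 h) (by linarith : (0:ℝ) ≤ β - L ^ 2)]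
  · rcases le_or_gt L 1 with h1 | h1
    · nlinarith
    · nlinarith [mul_nonneg (sq_nonneg (2 * L - 3)) (by linarith : (0:ℝ) ≤ L + 3),
        mul_nonneg (by linarith : (0:ℝ) ≤ 27 / 4 - β) (by linarith : (0:ℝ) ≤ L - 1)]

lemma log_sq_lt_iff {β δ : ℝ} (hβ0 : 0 < β) (hδ : 0 < δ) :
    (Real.log δ) ^ 2 < β ↔ δ ∈ Set.Ioo (Real.exp (-Real.sqrt β)) (Real.exp (Real.sqrt β)) := by
  rw [Set.mem_Ioo]
  constructor
  · intro h
    have h1 : |Real.log δ| < Real.sqrt β := by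
      rw [← Real.sqrt_sq_eq_abs]
      exact Real.sqrt_lt_sqrt (sq_nonneg _) h
    rw [abs_lt] at h1
    constructor
    · calc Real.exp (-Real.sqrt β) < Real.exp (Real.log δ) := Real.exp_lt_exp.2 h1.1
        _ = δ := Real.exp_log hδ
    · calc δ = Real.exp (Real.log δ) := (Real.exp_log hδ).symm
        _ < Real.exp (Real.sqrt β) := Real.exp_lt_exp.2 h1.2
  · rintro ⟨h1, h2⟩
    have hl1 : -Real.sqrt β < Real.log δ := by
      have := Real.log_lt_log (Real.exp_pos _) h1
      rwa [Real.log_exp] at this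
    have hl2 : Real.log δ < Real.sqrt β := by
      have := Real.log_lt_log hδ h2
      rwa [Real.log_exp] at this
    calc (Real.log δ) ^ 2 < (Real.sqrt β) ^ 2 := sq_lt_sq' hl1 hl2
      _ = β := Real.sq_sqrt hβ0.le

lemma sqrt_concave {β : ℝ} (hβ0 : 0 < β) (hβ : β ≤ 27 / 4) :
    ConcaveOn ℝ (Set.Ioo (Real.exp (-Real.sqrt β)) (Real.exp (Real.sqrt β)))
      (fun δ => Real.sqrt (β - (Real.log δ) ^ 2)) := by
  set a := Real.exp (-Real.sqrt β) with ha
  set b := Real.exp (Real.sqrt β) with hb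
  have hsub : Set.Ioo a b ⊆ ({0}ᶜ : Set ℝ) := fun x hx =>
    (ne_of_gt (lt_trans (Real.exp_pos _) hx.1))
  have hint : interior (Set.Ioo a b) = Set.Ioo a b := interior_Ioo
  refine concaveOn_of_hasDerivWithinAt2_nonpos (f' := fun δ =>
      -Real.log δ / (δ * Real.sqrt (β - (Real.log δ) ^ 2)))
    (f'' := fun δ => (β * Real.log δ - (Real.log δ) ^ 3 - β) /
      (δ ^ 2 * (β - (Real.log δ) ^ 2) * Real.sqrt (β - (Real.log δ) ^ 2)))
    (convex_Ioo a b) ?_ ?_ ?_ ?_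
  · exact Real.continuous_sqrt.comp_continuousOn
      (continuousOn_const.sub ((Real.continuousOn_log.mono hsub).pow 2))
  · rw [hint]
    intro x hx
    have hx0 : 0 < x := lt_trans (Real.exp_pos _) hx.1
    have hR : 0 < β - (Real.log x) ^ 2 := by
      have := (log_sq_lt_iff hβ0 hx0).2 hx
      linarith
    have hs0 : 0 < Real.sqrt (β - (Real.log x) ^ 2) := Real.sqrt_pos.2 hR
    have h1 : HasDerivAt Real.log x⁻¹ x := Real.hasDerivAt_log hx0.ne'
    have h2 := (hasDerivAt_const x β).sub (h1.pow 2)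
    have h3 := h2.sqrt hR.ne'
    apply HasDerivAt.hasDerivWithinAt
    convert h3 using 1
    · rfl
    · rfl
    · rfl
    simp only [Pi.sub_apply, Pi.pow_apply]
    field_simp
    ring
  · rw [hint]
    intro x hx
    have hx0 : 0 < x := lt_trans (Real.exp_pos _) hx.1
    have hR : 0 < β - (Real.log x) ^ 2 := by
      have := (log_sq_lt_iff hβ0 hx0).2 hx
      linarith
    set s := Real.sqrt (β - (Real.log x) ^ 2) with hsdef
    have hs0 : 0 < s := Real.sqrt_pos.2 hR
    have hs2 : s ^ 2 = β - (Real.log x) ^ 2 := Real.sq_sqrt hR.le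
    have h1 : HasDerivAt Real.log x⁻¹ x := Real.hasDerivAt_log hx0.ne'
    have h2 := (hasDerivAt_const x β).sub (h1.pow 2)
    have h3 := h2.sqrt hR.ne'
    have hnum : HasDerivAt (fun δ => -Real.log δ) (-x⁻¹) x := h1.neg
    have hden := (hasDerivAt_id x).mul h3
    have hdenne : x * s ≠ 0 := by positivity
    have h4 := hnum.div hden (by simpa using hdenne)
    apply HasDerivAt.hasDerivWithinAt
    convert h4 using 1
    · rfl
    · rfl
    have hβs : β = s ^ 2 + Real.log x ^ 2 := by linarith
    simp only [Pi.sub_apply, Pi.pow_apply, Pi.mul_apply, id]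
    rw [← hsdef, hβs]
    field_simp
    ring
  · rw [hint]
    intro x hx
    have hx0 : 0 < x := lt_trans (Real.exp_pos _) hx.1
    have hR : 0 < β - (Real.log x) ^ 2 := by
      have := (log_sq_lt_iff hβ0 hx0).2 hx
      linarith
    have hL : (Real.log x) ^ 2 < β := by linarith
    have hs0 : 0 < Real.sqrt (β - (Real.log x) ^ 2) := Real.sqrt_pos.2 hR
    exact div_nonpos_of_nonpos_of_nonneg (key_cubic hβ hL) (by positivity)

theorem stmt_11 (β : ℝ) (hβ0 : 0 < β) (hβ : β ≤ 27 / 4) :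
    ConvexOn ℝ {p : ℝ × ℝ | 0 < p.1 ∧ 0 < p.2 ∧ (Real.log p.2) ^ 2 < β}
      (fun p : ℝ × ℝ => p.1 ^ 3 / (β - (Real.log p.2) ^ 2)) := by
  set a := Real.exp (-Real.sqrt β) with ha
  set b := Real.exp (Real.sqrt β) with hb
  have hSet : {p : ℝ × ℝ | 0 < p.1 ∧ 0 < p.2 ∧ (Real.log p.2) ^ 2 < β} =
      (Set.Ioi (0:ℝ)) ×ˢ (Set.Ioo a b) := by
    ext p
    simp only [Set.mem_setOf_eq, Set.mem_prod, Set.mem_Ioi]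
    constructor
    · rintro ⟨h1, h2, h3⟩
      exact ⟨h1, (log_sq_lt_iff hβ0 h2).1 h3⟩
    · rintro ⟨h1, h2⟩
      have h2' : 0 < p.2 := lt_trans (Real.exp_pos _) h2.1
      exact ⟨h1, h2', (log_sq_lt_iff hβ0 h2').2 h2⟩
  have hconc := sqrt_concave hβ0 hβ
  set g : ℝ → ℝ := fun δ => Real.sqrt (β - (Real.log δ) ^ 2) with hg
  constructor
  · rw [hSet]
    exact (convex_Ioi 0).prod (convex_Ioo a b)
  · intro p hp q hq lam mu hlam hmu hsum
    simp only [Set.mem_setOf_eq] at hp hq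
    obtain ⟨hp1, hp2, hp3⟩ := hp
    obtain ⟨hq1, hq2, hq3⟩ := hq
    have hRp : 0 < β - (Real.log p.2) ^ 2 := by linarith
    have hRq : 0 < β - (Real.log q.2) ^ 2 := by linarith
    have hgp : (g p.2) ^ 2 = β - (Real.log p.2) ^ 2 := Real.sq_sqrt hRp.le
    have hgq : (g q.2) ^ 2 = β - (Real.log q.2) ^ 2 := Real.sq_sqrt hRq.le
    have hgp0 : 0 < g p.2 := Real.sqrt_pos.2 hRp
    have hgq0 : 0 < g q.2 := Real.sqrt_pos.2 hRq
    have hmemp : p.2 ∈ Set.Ioo a b := (log_sq_lt_iff hβ0 hp2).1 hp3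
    have hmemq : q.2 ∈ Set.Ioo a b := (log_sq_lt_iff hβ0 hq2).1 hq3
    -- midpoint facts
    set m2 : ℝ := lam * p.2 + mu * q.2 with hm2
    have hmemm : m2 ∈ Set.Ioo a b := by
      have := (convex_Ioo a b) hmemp hmemq hlam hmu hsum
      simpa [smul_eq_mul] using this
    have hm20 : 0 < m2 := lt_trans (Real.exp_pos _) hmemm.1
    have hRm : 0 < β - (Real.log m2) ^ 2 := by
      have := (log_sq_lt_iff hβ0 hm20).2 hmemm
      linarith
    have hgm : (g m2) ^ 2 = β - (Real.log m2) ^ 2 := Real.sq_sqrt hRm.le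
    have hgm0 : 0 < g m2 := Real.sqrt_pos.2 hRm
    have hconc2 : lam * g p.2 + mu * g q.2 ≤ g m2 := by
      have := hconc.2 hmemp hmemq hlam hmu hsum
      simpa [smul_eq_mul, hm2] using this
    -- rewrite goal
    simp only [smul_eq_mul, Prod.smul_fst, Prod.smul_snd, Prod.fst_add, Prod.snd_add,
      Prod.mk_add_mk, Prod.smul_mk]
    show (lam * p.1 + mu * q.1) ^ 3 / (β - Real.log (lam * p.2 + mu * q.2) ^ 2) ≤
      lam * (p.1 ^ 3 / (β - Real.log p.2 ^ 2)) + mu * (q.1 ^ 3 / (β - Real.log q.2 ^ 2))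
    rw [← hm2, ← hgm, ← hgp, ← hgq]
    rcases eq_or_lt_of_le hlam with hlam0 | hlam0
    · -- lam = 0
      have hmu1 : mu = 1 := by linarith
      subst hmu1
      rw [← hlam0]
      simp only [zero_mul, one_mul, zero_add]
      have : m2 = q.2 := by rw [hm2, ← hlam0]; ring
      rw [this]
    rcases eq_or_lt_of_le hmu with hmu0 | hmu0
    · -- mu = 0
      have hlam1 : lam = 1 := by linarith
      subst hlam1
      rw [← hmu0]
      simp only [zero_mul, one_mul, add_zero, mul_zero]
      have : m2 = p.2 := by rw [hm2, ← hmu0]; ring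
      rw [this]
    -- main case: 0 < lam, 0 < mu
    have hA : (0:ℝ) ≤ lam * p.1 := by positivity
    have hC : (0:ℝ) ≤ mu * q.1 := by positivity
    have hB : 0 < lam * g p.2 := by positivity
    have hD : 0 < mu * g q.2 := by positivity
    have step1 : (lam * p.1 + mu * q.1) ^ 3 / (g m2) ^ 2 ≤
        (lam * p.1 + mu * q.1) ^ 3 / (lam * g p.2 + mu * g q.2) ^ 2 := by
      apply div_le_div_of_nonneg_left (by positivity) (by positivity)
      have h1 : 0 < lam * g p.2 + mu * g q.2 := by positivity
      exact pow_le_pow_left₀ h1.le hconc2 2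
    have step2 : (lam * p.1 + mu * q.1) ^ 3 / (lam * g p.2 + mu * g q.2) ^ 2 ≤
        (lam * p.1) ^ 3 / (lam * g p.2) ^ 2 + (mu * q.1) ^ 3 / (mu * g q.2) ^ 2 :=
      radon2 hA hC hB hD
    have e1 : (lam * p.1) ^ 3 / (lam * g p.2) ^ 2 = lam * (p.1 ^ 3 / (g p.2) ^ 2) := by
      field_simp
    have e2 : (mu * q.1) ^ 3 / (mu * g q.2) ^ 2 = mu * (q.1 ^ 3 / (g q.2) ^ 2) := by
      field_simp
    calc (lam * p.1 + mu * q.1) ^ 3 / (g m2) ^ 2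
        ≤ (lam * p.1) ^ 3 / (lam * g p.2) ^ 2 + (mu * q.1) ^ 3 / (mu * g q.2) ^ 2 :=
          le_trans step1 step2
      _ = lam * (p.1 ^ 3 / (g p.2) ^ 2) + mu * (q.1 ^ 3 / (g q.2) ^ 2) := by rw [e1, e2]
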